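/- arXiv:2008.11637 — 3 statements merged into one kernel-verified Lean document; each statement's English description precedes it below -/
import Mathlib

section
/- Let R be a commutative ring, ell ≥ 1 and j ≥ 1 integers, and alpha_2, alpha_3, ... elements of R. Set t_1 = t + sum_{i≥2} alpha_i t^i (a polynomial, taking finitely many alpha_i nonzero, say alpha_i = 0 for i > j+1). Then the coefficient of t^{ell + j} in t_1^ell equals ell * alpha_{j+1} + P(alpha_2, ..., alpha_j), where P is a polynomial expression (with integer coefficients) depending only on ell and j in the variables alpha_2, ..., alpha_j. In particular, the coefficient of t^{ell+j} in t_1^ell, viewed as a function of alpha_{j+1} with alpha_2, ..., alpha_j fixed, is affine with slope ell. -/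
open Polynomial

lemma coeff0pow {R : Type*} [CommRing R] (u : R[X]) (hu : u.coeff 0 = 1) (k : ℕ) :
    (u ^ k).coeff 0 = 1 := by
  rw [Polynomial.coeff_zero_eq_eval_zero] at *
  simp [hu]

lemma key {R : Type*} [CommRing R] (ℓ j : ℕ) (hℓ : 1 ≤ ℓ) (hj : 1 ≤ j)
    (u : R[X]) (hu : u.coeff 0 = 1) (a : R) :
    ((u * X + C a * X ^ (j + 1)) ^ ℓ).coeff (ℓ + j)
      = ((u * X) ^ ℓ).coeff (ℓ + j) + (ℓ : R) * a := by
  have hterm : ∀ k, ((u * X) ^ k * (C a * X ^ (j+1)) ^ (ℓ - k) * (ℓ.choose k : R[X])).coeff (ℓ + j)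
      = (a ^ (ℓ - k) * (ℓ.choose k : R)) *
        (if k + (j+1)*(ℓ-k) ≤ ℓ + j then (u ^ k).coeff (ℓ + j - (k + (j+1)*(ℓ-k))) else 0) := by
    intro k
    have h1 : (u * X) ^ k * (C a * X ^ (j+1)) ^ (ℓ - k) * (ℓ.choose k : R[X])
        = C (a ^ (ℓ - k) * (ℓ.choose k : R)) * (u ^ k * X ^ (k + (j+1)*(ℓ-k))) := by
      simp only [mul_pow, ← Polynomial.C_pow, ← pow_mul, pow_add, ← Polynomial.C_eq_natCast,
        Polynomial.C_mul]
      ring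
    rw [h1, Polynomial.coeff_C_mul, Polynomial.coeff_mul_X_pow']
  rw [add_pow, Polynomial.finset_sum_coeff]
  have hsub : ({ℓ-1, ℓ} : Finset ℕ) ⊆ Finset.range (ℓ+1) := by
    intro x hx
    simp only [Finset.mem_insert, Finset.mem_singleton] at hx
    simp only [Finset.mem_range]; omega
  rw [← Finset.sum_subset hsub]
  · rw [Finset.sum_insert (by simp; omega), Finset.sum_singleton, hterm, hterm]
    have e1 : ℓ - 1 + (j+1)*(ℓ-(ℓ-1)) = ℓ + j := by
      have : ℓ - (ℓ-1) = 1 := by omega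
      rw [this]; omega
    rw [e1]
    have e2 : ℓ - (ℓ - 1) = 1 := by omega
    rw [e2]
    simp only [le_refl, if_true, Nat.sub_self, pow_one, Nat.choose_self, Nat.cast_one]
    rw [coeff0pow u hu]
    have e3 : ℓ.choose (ℓ-1) = ℓ := by
      rw [← Nat.choose_symm (by omega : ℓ - 1 ≤ ℓ)]
      have : ℓ - (ℓ - 1) = 1 := by omega
      rw [this, Nat.choose_one_right]
    rw [e3]
    simp only [Nat.mul_zero, Nat.add_zero]
    rw [if_pos (by omega : ℓ ≤ ℓ + j)]
    have e5 : ((u * X) ^ ℓ).coeff (ℓ + j) = (u ^ ℓ).coeff (ℓ + j - ℓ) := by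
      rw [mul_pow, Polynomial.coeff_mul_X_pow', if_pos (by omega : ℓ ≤ ℓ + j)]
    rw [e5]
    ring
  · intro x hx hnx
    simp only [Finset.mem_insert, Finset.mem_singleton, not_or] at hnx
    simp only [Finset.mem_range] at hx
    rw [hterm]
    have : ¬ (x + (j+1)*(ℓ-x) ≤ ℓ + j) := by
      have hx2 : x + 2 ≤ ℓ := by omega
      have heq : x + (j+1)*(ℓ-x) = x + j * (ℓ - x) + (ℓ - x) := by
        rw [add_mul, one_mul]; omega
      have h3 : j * 2 ≤ j * (ℓ - x) := Nat.mul_le_mul_left j (by omega)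
      omega
    rw [if_neg this, mul_zero]

theorem stmt3 (R : Type*) [CommRing R] (ℓ j : ℕ) (hℓ : 1 ≤ ℓ) (hj : 1 ≤ j) :
    ∃ P : MvPolynomial (Finset.Icc 2 j) ℤ,
      ∀ α : ℕ → R,
        (((Polynomial.X + ∑ i ∈ Finset.Icc 2 (j + 1),
            Polynomial.C (α i) * Polynomial.X ^ i : Polynomial R)) ^ ℓ).coeff (ℓ + j)
          = (ℓ : R) * α (j + 1) + MvPolynomial.aeval (fun i => α i.1) P := by
  classical
  set ι := { x // x ∈ Finset.Icc 2 j }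
  refine ⟨(((1 + ∑ i ∈ (Finset.Icc 2 j).attach,
      Polynomial.C (MvPolynomial.X i : MvPolynomial (Finset.Icc 2 j) ℤ) * Polynomial.X ^ (i.1 - 1))
      * Polynomial.X) ^ ℓ).coeff (ℓ + j), ?_⟩
  intro α
  set u : R[X] := 1 + ∑ i ∈ Finset.Icc 2 j, Polynomial.C (α i) * Polynomial.X ^ (i - 1) with hudef
  have hu0 : u.coeff 0 = 1 := by
    rw [hudef]
    rw [Polynomial.coeff_add, Polynomial.coeff_one, Polynomial.finset_sum_coeff]
    rw [Finset.sum_eq_zero, add_zero]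
    · simp
    · intro i hi
      simp only [Finset.mem_Icc] at hi
      rw [Polynomial.coeff_C_mul, Polynomial.coeff_X_pow]
      rw [if_neg (by omega)]
      ring
  have hux : u * Polynomial.X = Polynomial.X + ∑ i ∈ Finset.Icc 2 j,
      Polynomial.C (α i) * Polynomial.X ^ i := by
    rw [hudef, add_mul, one_mul, Finset.sum_mul]
    congr 1
    refine Finset.sum_congr rfl fun i hi => ?_
    simp only [Finset.mem_Icc] at hi
    rw [mul_assoc, ← pow_succ]
    congr 2
    omega
  have hsplit : (Polynomial.X + ∑ i ∈ Finset.Icc 2 (j + 1),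
      Polynomial.C (α i) * Polynomial.X ^ i : R[X])
      = u * Polynomial.X + Polynomial.C (α (j+1)) * Polynomial.X ^ (j+1) := by
    rw [Finset.sum_Icc_succ_top (by omega : 2 ≤ j + 1), hux]
    ring
  rw [hsplit, key ℓ j hℓ hj u hu0 (α (j+1))]
  have haev : (MvPolynomial.aeval (fun i : ι => α i.1) : MvPolynomial (Finset.Icc 2 j) ℤ →ₐ[ℤ] R)
      ((((1 + ∑ i ∈ (Finset.Icc 2 j).attach,
      Polynomial.C (MvPolynomial.X i : MvPolynomial (Finset.Icc 2 j) ℤ) * Polynomial.X ^ (i.1 - 1))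
      * Polynomial.X) ^ ℓ).coeff (ℓ + j)) = ((u * Polynomial.X) ^ ℓ).coeff (ℓ + j) := by
    set f : MvPolynomial (Finset.Icc 2 j) ℤ →+* R :=
      (MvPolynomial.aeval (fun i : ι => α i.1) : MvPolynomial (Finset.Icc 2 j) ℤ →ₐ[ℤ] R).toRingHom
    show f _ = _
    rw [← Polynomial.coeff_map]
    congr 1
    rw [Polynomial.map_pow, Polynomial.map_mul, Polynomial.map_add, Polynomial.map_one,
      Polynomial.map_sum, Polynomial.map_X, hudef]
    congr 2
    have hstep : ∑ i ∈ (Finset.Icc 2 j).attach,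
        Polynomial.map f (Polynomial.C (MvPolynomial.X i : MvPolynomial (Finset.Icc 2 j) ℤ)
          * Polynomial.X ^ (i.1 - 1))
        = ∑ i ∈ (Finset.Icc 2 j).attach,
          (fun n => Polynomial.C (α n) * Polynomial.X ^ (n - 1)) i.1 := by
      refine Finset.sum_congr rfl fun i _ => ?_
      rw [Polynomial.map_mul, Polynomial.map_C, Polynomial.map_pow, Polynomial.map_X]
      simp [f]
    rw [hstep, Finset.sum_attach (Finset.Icc 2 j) (fun n => Polynomial.C (α n) * Polynomial.X ^ (n - 1))]
  rw [haev]
  ring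
end

section
/- Let k be a finite field of characteristic p, m ≥ 2 an integer with p > m, f in k[x_1,...,x_n], and denote by f_0, ..., f_{m-1} the jet polynomials of f in the variables x^{(m-1)} = (x_{ij})_{0≤i≤m-1, 1≤j≤n}. Then for any a_{-m}, ..., a_{-1} in k with a_{-m} ≠ 0, there exist b_0 in k and b_{m-1} in k^* such that for every finite extension k' of k and every point x^{(m-1)} in (k')^{mn}: Tr_{k'/F_p}( sum_{i=0}^{m-1} a_{-i-1} f_i(x^{(i)}) ) computed in the reparameterized coordinates equals Tr_{k'/F_p}( b_0 f_0(x^{(0)}) + b_{m-1} f_{m-1}(x^{(m-1)}) ) after composing with an explicit polynomial automorphism of affine mn-space over k. More precisely: there exists a polynomial automorphism Theta of A^{mn}_k commuting with the projection to the level-0 coordinates, and b_0 in k, b_{m-1} in k^*, such that (sum_{i=0}^{m-1} a_{-i-1} f_i) ∘ Theta = b_0 f_0 + b_{m-1} f_{m-1} as polynomials. -/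
/-- The `ℓ`-th jet polynomial `f_ℓ` of `f ∈ R[x_1,…,x_n]`: the coefficient of `t^ℓ` in
`f(∑_i x_{i1} t^i, …, ∑_i x_{in} t^i)`, a polynomial in the variables
`x_{ij}`, `0 ≤ i ≤ m-1`, `1 ≤ j ≤ n`. -/
noncomputable def jetCoeff {R : Type*} [CommRing R] (m n : ℕ)
    (f : MvPolynomial (Fin n) R) (ℓ : ℕ) : MvPolynomial (Fin m × Fin n) R :=
  (MvPolynomial.aeval
      (fun j : Fin n =>
        ∑ i : Fin m, Polynomial.C (MvPolynomial.X (i, j)) * Polynomial.X ^ (i : ℕ)) f :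
    Polynomial (MvPolynomial (Fin m × Fin n) R)).coeff ℓ

section Aux
open Polynomial Finset


variable {R : Type*} [CommRing R]

lemma coeffPowLt {φ : R[X]} (h0 : φ.coeff 0 = 0) {i ℓ : ℕ} (h : ℓ < i) :
    (φ ^ i).coeff ℓ = 0 := by
  have hd : (X : R[X]) ^ i ∣ φ ^ i := pow_dvd_pow_of_dvd (X_dvd_iff.mpr h0) i
  exact (X_pow_dvd_iff.mp hd) ℓ h

lemma coeffPowSelf {φ : R[X]} (h0 : φ.coeff 0 = 0) (i : ℕ) :
    (φ ^ i).coeff i = (φ.coeff 1) ^ i := by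
  have hφ : φ = φ.divX * X := by
    conv_lhs => rw [← Polynomial.divX_mul_X_add φ]
    simp [h0]
  have h1 : (φ ^ i).coeff i = (φ.divX ^ i).coeff 0 := by
    conv_lhs => rw [hφ]
    rw [mul_pow, Polynomial.coeff_mul_X_pow']
    simp
  have h2 : (φ.divX ^ i).coeff 0 = (φ.divX.coeff 0) ^ i := by
    simpa using (Polynomial.constantCoeff (R := R)).map_pow φ.divX i
  rw [h1, h2, Polynomial.coeff_divX]

lemma stepCoeff {φ : R[X]} (h0 : φ.coeff 0 = 0) (h1 : φ.coeff 1 = 1) (α : R)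
    {m s i ℓ : ℕ} (hs : 2 ≤ s) (hsm : s ≤ m - 1) (hi1 : 1 ≤ i) (him : m - s ≤ i)
    (hℓ : ℓ < m) (hm : 2 ≤ m) :
    ((φ + C α * X ^ s) ^ i).coeff ℓ
      = (φ ^ i).coeff ℓ + (if ℓ = m - 1 ∧ i = m - s then (i : R) * α else 0) := by
  have key : ∀ x ∈ Finset.range (i + 1),
      ((C α * X ^ s) ^ x * φ ^ (i - x) * ((i.choose x : ℕ) : R[X])).coeff ℓ
        = (if x = 0 then (φ ^ i).coeff ℓ
            else if x = 1 ∧ ℓ = m - 1 ∧ i = m - s then (i : R) * α else 0) := by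
    intro x hx
    have hrw : (C α * X ^ s) ^ x * φ ^ (i - x) * ((i.choose x : ℕ) : R[X])
        = C (α ^ x * (i.choose x : R)) * (φ ^ (i - x) * X ^ (s * x)) := by
      rw [mul_pow, ← C_pow, ← pow_mul, ← C_eq_natCast, C_mul]
      ring
    rw [hrw, coeff_C_mul, coeff_mul_X_pow']
    rcases Nat.eq_zero_or_pos x with hx0 | hx0
    · subst hx0; simp
    have hxne : x ≠ 0 := hx0.ne'
    simp only [hxne, if_false]
    by_cases hle : s * x ≤ ℓ
    · simp only [hle, if_true]
      have e1 : ℓ - s * x + s * x = ℓ := Nat.sub_add_cancel hle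
      have e2 : i - x + x = i := Nat.sub_add_cancel (by simpa using Finset.mem_range_succ_iff.mp hx)
      rcases lt_trichotomy (ℓ - s * x) (i - x) with hlt | heq | hgt
      · rw [coeffPowLt h0 hlt, mul_zero]
        have hnot : ¬ (x = 1 ∧ ℓ = m - 1 ∧ i = m - s) := by
          rintro ⟨rfl, rfl, rfl⟩; omega
        simp [hnot]
      · have e3 : ℓ + x = i + s * x := by omega
        have hx1 : x = 1 := by
          by_contra hx1
          have h2x : 2 ≤ x := by omega
          have hmul : s + x ≤ s * x := Nat.add_le_mul hs h2x
          omega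
        subst hx1
        have hc : ℓ = m - 1 ∧ i = m - s := by omega
        rw [heq, coeffPowSelf h0, h1, one_pow, if_pos ⟨rfl, hc.1, hc.2⟩]
        simp [Nat.choose_one_right]
        ring
      · exfalso
        rcases eq_or_lt_of_le (show 1 ≤ x from hx0) with rfl | h2x
        · omega
        · have hmul : s + x ≤ s * x := Nat.add_le_mul hs h2x
          omega
    · simp only [hle, if_false, mul_zero]
      have hnot : ¬ (x = 1 ∧ ℓ = m - 1 ∧ i = m - s) := by
        rintro ⟨rfl, rfl, rfl⟩; omega
      simp [hnot]
  rw [add_comm φ, add_pow, Polynomial.finset_sum_coeff, Finset.sum_congr rfl key]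
  rw [← Finset.sum_subset (s₁ := ({0, 1} : Finset ℕ))
      (by intro x hx; simp at hx; simp; omega)
      (by intro x hx hx2; simp at hx2; simp [hx2.1, hx2.2])]
  rw [Finset.sum_pair (by norm_num)]
  simp

lemma existsPhi {k : Type*} [Field k] (p : ℕ) (hp : p.Prime) [CharP k p]
    {m : ℕ} (hm : 2 ≤ m) (hpm : m < p) (A : ℕ → k) (hA : A (m - 1) ≠ 0) :
    ∃ φ : k[X], φ.coeff 0 = 0 ∧ φ.coeff 1 = 1 ∧
      ∀ i, 1 ≤ i → i ≤ m - 2 → ∑ ℓ ∈ Finset.range m, A ℓ * (φ ^ i).coeff ℓ = 0 := by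
  suffices h : ∀ r, r ≤ m - 2 → ∃ φ : k[X], φ.coeff 0 = 0 ∧ φ.coeff 1 = 1 ∧
      ∀ i, m - 1 - r ≤ i → i ≤ m - 2 → ∑ ℓ ∈ Finset.range m, A ℓ * (φ ^ i).coeff ℓ = 0 by
    obtain ⟨φ, h0, h1, hG⟩ := h (m - 2) le_rfl
    exact ⟨φ, h0, h1, fun i hi1 hi2 => hG i (by omega) hi2⟩
  intro r
  induction r with
  | zero =>
    intro _
    exact ⟨X, by simp, by simp, fun i hi1 hi2 => absurd (hi1.trans hi2) (by omega)⟩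
  | succ r ih =>
    intro hr
    obtain ⟨φ, h0, h1, hG⟩ := ih (by omega)
    set i₀ := m - 2 - r with hi₀
    set s := m - i₀ with hs_def
    have hs : 2 ≤ s := by omega
    have hsm : s ≤ m - 1 := by omega
    have hms : m - s = i₀ := by omega
    have hi₀1 : 1 ≤ i₀ := by omega
    have hi₀k : (i₀ : k) ≠ 0 := by
      rw [Ne, CharP.cast_eq_zero_iff k p i₀]
      exact Nat.not_dvd_of_pos_of_lt (by omega) (by omega)
    set G : k := ∑ ℓ ∈ Finset.range m, A ℓ * (φ ^ i₀).coeff ℓ with hGdef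
    set α : k := -G / ((i₀ : k) * A (m - 1)) with hα
    refine ⟨φ + C α * X ^ s, ?_, ?_, ?_⟩
    · rw [coeff_add, h0, coeff_C_mul, coeff_X_pow, if_neg (by omega)]; ring
    · rw [coeff_add, h1, coeff_C_mul, coeff_X_pow, if_neg (by omega)]; ring
    · intro i hi1 hi2
      have hi1' : 1 ≤ i := by omega
      have him : m - s ≤ i := by omega
      have hsum : ∑ ℓ ∈ Finset.range m, A ℓ * ((φ + C α * X ^ s) ^ i).coeff ℓ
          = (∑ ℓ ∈ Finset.range m, A ℓ * (φ ^ i).coeff ℓ)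
            + ∑ ℓ ∈ Finset.range m,
                A ℓ * (if ℓ = m - 1 ∧ i = m - s then (i : k) * α else 0) := by
        rw [← Finset.sum_add_distrib]
        refine Finset.sum_congr rfl fun ℓ hℓ => ?_
        rw [stepCoeff h0 h1 α hs hsm hi1' him (Finset.mem_range.mp hℓ) hm, mul_add]
      rw [hsum]
      by_cases hii : i = m - s
      · have hii₀ : i = i₀ := by omega
        have hsum2 : ∑ ℓ ∈ Finset.range m,
            A ℓ * (if ℓ = m - 1 ∧ i = m - s then (i : k) * α else 0)
            = A (m - 1) * ((i : k) * α) := by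
          rw [Finset.sum_eq_single (m - 1)]
          · rw [if_pos ⟨rfl, hii⟩]
          · intro b _ hb; rw [if_neg (by tauto), mul_zero]
          · intro hmem; exact absurd (Finset.mem_range.mpr (by omega)) hmem
        rw [hsum2, hii₀, ← hGdef, hα]
        field_simp
        ring
      · have h1' : ∑ ℓ ∈ Finset.range m, A ℓ * (φ ^ i).coeff ℓ = 0 :=
          hG i (by omega) hi2
        have h2' : ∑ ℓ ∈ Finset.range m,
            A ℓ * (if ℓ = m - 1 ∧ i = m - s then (i : k) * α else 0) = 0 := by
          refine Finset.sum_eq_zero fun ℓ _ => ?_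
          rw [if_neg (by tauto), mul_zero]
        rw [h1', h2', add_zero]

section Sub

variable {k : Type*} [CommRing k] {m n : ℕ}

/-- linear substitution on jet variables -/
noncomputable def subHom (M : Matrix (Fin m) (Fin m) k) :
    MvPolynomial (Fin m × Fin n) k →ₐ[k] MvPolynomial (Fin m × Fin n) k :=
  MvPolynomial.aeval fun q : Fin m × Fin n =>
    ∑ i' : Fin m, MvPolynomial.C (M q.1 i') * MvPolynomial.X (i', q.2)

lemma subHom_X (M : Matrix (Fin m) (Fin m) k) (q : Fin m × Fin n) :
    subHom (n := n) M (MvPolynomial.X q)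
      = ∑ i' : Fin m, MvPolynomial.C (M q.1 i') * MvPolynomial.X (i', q.2) := by
  simp [subHom]

lemma subHom_comp (M N : Matrix (Fin m) (Fin m) k) :
    (subHom (n := n) M).comp (subHom N) = subHom (N * M) := by
  apply MvPolynomial.algHom_ext
  intro q
  simp only [AlgHom.comp_apply, subHom_X, map_sum, map_mul, Matrix.mul_apply,
    MvPolynomial.algHom_C, MvPolynomial.algebraMap_eq, Finset.mul_sum, Finset.sum_mul,
    MvPolynomial.C_mul]
  rw [Finset.sum_comm]
  exact Finset.sum_congr rfl fun i _ => Finset.sum_congr rfl fun i' _ => by ring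

lemma subHom_one : subHom (m := m) (n := n) (1 : Matrix (Fin m) (Fin m) k)
    = AlgHom.id k _ := by
  apply MvPolynomial.algHom_ext
  intro q
  rw [subHom_X, AlgHom.id_apply, Finset.sum_eq_single q.1]
  · simp [Matrix.one_apply]
  · intro b _ hb; simp [Matrix.one_apply, (by simpa using hb.symm : ¬ q.1 = b)]
  · intro h; exact absurd (Finset.mem_univ q.1) h

/-- dvd lemma -/
lemma dvd_aeval_sub {A : Type*} [CommRing A] [Algebra k A] {n : ℕ}
    (u v : Fin n → A) (d : A) (h : ∀ j, d ∣ u j - v j) (f : MvPolynomial (Fin n) k) :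
    d ∣ MvPolynomial.aeval u f - MvPolynomial.aeval v f := by
  induction f using MvPolynomial.induction_on with
  | C a => simp
  | add p q hp hq =>
    rw [map_add, map_add, add_sub_add_comm]
    exact dvd_add hp hq
  | mul_X p j hp =>
    rw [map_mul, map_mul, MvPolynomial.aeval_X, MvPolynomial.aeval_X]
    have : MvPolynomial.aeval u p * u j - MvPolynomial.aeval v p * v j
        = MvPolynomial.aeval u p * (u j - v j)
          + (MvPolynomial.aeval u p - MvPolynomial.aeval v p) * v j := by ring
    rw [this]
    exact dvd_add ((h j).mul_left _) (hp.mul_right _)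

/-- truncation -/
lemma dvd_sub_trunc {A : Type*} [CommRing A] (q : A[X]) (m : ℕ) :
    (X : A[X]) ^ m ∣ q - ∑ i : Fin m, C (q.coeff i) * X ^ (i : ℕ) := by
  rw [X_pow_dvd_iff]
  intro d hd
  rw [coeff_sub, finset_sum_coeff]
  have : ∑ i : Fin m, (C (q.coeff ↑i) * X ^ (i : ℕ)).coeff d = q.coeff d := by
    rw [Finset.sum_eq_single (⟨d, hd⟩ : Fin m)]
    · simp
    · intro b _ hb
      have hne : ¬ d = (b : ℕ) := fun h => hb (Fin.val_injective h.symm)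
      simp [coeff_C_mul, coeff_X_pow, hne]
    · intro h; exact absurd (Finset.mem_univ _) h
  rw [this, sub_self]
end Sub


section Key
variable {k : Type*} [CommRing k] {m n : ℕ}

lemma coeff_aeval_comp (φ : k[X]) (h0 : φ.coeff 0 = 0)
    (g : Polynomial (MvPolynomial (Fin m × Fin n) k)) {ℓ : ℕ} (hℓ : ℓ < m) :
    (Polynomial.aeval (Polynomial.map (MvPolynomial.C (σ := Fin m × Fin n)) φ) g).coeff ℓ
      = ∑ i : Fin m, ((φ ^ (i : ℕ)).coeff ℓ) • g.coeff (i : ℕ) := by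
  induction g using Polynomial.induction_on' with
  | add p q hp hq =>
    rw [map_add, coeff_add, hp, hq, ← Finset.sum_add_distrib]
    exact Finset.sum_congr rfl fun i _ => by rw [coeff_add, smul_add]
  | monomial d a =>
    have hmono : (Polynomial.aeval (Polynomial.map (MvPolynomial.C (σ := Fin m × Fin n)) φ) (monomial d a))
        = Polynomial.C a * Polynomial.map MvPolynomial.C (φ ^ d) := by
      rw [← Polynomial.C_mul_X_pow_eq_monomial, map_mul, map_pow, Polynomial.aeval_X,
        Polynomial.aeval_C, Polynomial.algebraMap_eq, Polynomial.map_pow]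
    rw [hmono, coeff_C_mul, Polynomial.coeff_map]
    by_cases hdm : d < m
    · rw [Finset.sum_eq_single (⟨d, hdm⟩ : Fin m)]
      · rw [coeff_monomial, if_pos rfl, MvPolynomial.smul_eq_C_mul]
        ring
      · intro b _ hb
        rw [coeff_monomial, if_neg (fun h => hb (Fin.val_injective h.symm)), smul_zero]
      · intro h; exact absurd (Finset.mem_univ _) h
    · rw [coeffPowLt h0 (by omega), map_zero, mul_zero]
      refine (Finset.sum_eq_zero fun b _ => ?_).symm
      rw [coeff_monomial, if_neg (by omega : ¬ d = (b : ℕ)), smul_zero]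

lemma subHom_jetCoeff (φ : k[X]) (h0 : φ.coeff 0 = 0)
    (f : MvPolynomial (Fin n) k) {ℓ : ℕ} (hℓ : ℓ < m) :
    subHom (n := n) (Matrix.of fun i i' : Fin m => (φ ^ (i' : ℕ)).coeff (i : ℕ))
        (jetCoeff m n f ℓ)
      = ∑ i : Fin m, ((φ ^ (i : ℕ)).coeff ℓ) • jetCoeff m n f (i : ℕ) := by
  classical
  set M : Matrix (Fin m) (Fin m) k :=
    Matrix.of fun i i' : Fin m => (φ ^ (i' : ℕ)).coeff (i : ℕ) with hM
  set Θ : MvPolynomial (Fin m × Fin n) k →ₐ[k] MvPolynomial (Fin m × Fin n) k := subHom M with hΘ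
  set u : Fin n → Polynomial (MvPolynomial (Fin m × Fin n) k) := fun j =>
    ∑ i : Fin m, Polynomial.C (MvPolynomial.X (i, j)) * Polynomial.X ^ (i : ℕ) with hu
  set v : Fin n → Polynomial (MvPolynomial (Fin m × Fin n) k) := fun j =>
    ∑ i : Fin m, Polynomial.C (Θ (MvPolynomial.X (i, j))) * Polynomial.X ^ (i : ℕ) with hv
  set φ' : Polynomial (MvPolynomial (Fin m × Fin n) k) := Polynomial.map MvPolynomial.C φ with hφ'
  set w : Fin n → Polynomial (MvPolynomial (Fin m × Fin n) k) := fun j =>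
    ∑ i' : Fin m, Polynomial.C (MvPolynomial.X (i', j)) * φ' ^ (i' : ℕ) with hw
  have step2 : (Polynomial.mapAlgHom Θ).comp (MvPolynomial.aeval u)
      = MvPolynomial.aeval v := by
    apply MvPolynomial.algHom_ext
    intro j
    simp only [AlgHom.comp_apply, MvPolynomial.aeval_X, hu, hv, Polynomial.coe_mapAlgHom]
    simp [Polynomial.map_sum]
  have step3 : ∀ j, (Polynomial.X : Polynomial (MvPolynomial (Fin m × Fin n) k)) ^ m ∣ w j - v j := by
    intro j
    have hvj : v j = ∑ i' : Fin m, Polynomial.C (MvPolynomial.X (i', j))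
        * (∑ i : Fin m, Polynomial.C ((φ' ^ (i' : ℕ)).coeff (i : ℕ))
            * Polynomial.X ^ (i : ℕ)) := by
      have hcoeff : ∀ i i' : Fin m, (φ' ^ (i' : ℕ)).coeff (i : ℕ)
          = MvPolynomial.C (M i i') := by
        intro i i'
        rw [hφ', ← Polynomial.map_pow, Polynomial.coeff_map]
        rfl
      simp only [hv, hΘ, hcoeff]
      simp only [subHom_X]
      simp only [map_sum, Polynomial.C_mul, Finset.sum_mul, Finset.mul_sum]
      rw [Finset.sum_comm]
      exact Finset.sum_congr rfl fun i _ => Finset.sum_congr rfl fun i' _ => by ring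
    rw [hvj, hw, ← Finset.sum_sub_distrib]
    refine Finset.dvd_sum fun i' _ => ?_
    rw [← mul_sub]
    exact Dvd.dvd.mul_left (dvd_sub_trunc _ m) _
  have step4 : (MvPolynomial.aeval v f).coeff ℓ = (MvPolynomial.aeval w f).coeff ℓ := by
    have hd := dvd_aeval_sub (k := k) w v (Polynomial.X ^ m) step3 f
    have := Polynomial.X_pow_dvd_iff.mp hd ℓ hℓ
    rw [coeff_sub, sub_eq_zero] at this
    exact this.symm
  have step5 : ((Polynomial.aeval (R := MvPolynomial (Fin m × Fin n) k) φ').restrictScalars k).comp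
      (MvPolynomial.aeval u) = MvPolynomial.aeval w := by
    apply MvPolynomial.algHom_ext
    intro j
    simp only [AlgHom.comp_apply, MvPolynomial.aeval_X, AlgHom.coe_restrictScalars',
      hu, hw, map_sum, map_mul, map_pow, Polynomial.aeval_X, Polynomial.aeval_C,
      Polynomial.algebraMap_eq]
  have chain : Θ (jetCoeff m n f ℓ) = (Polynomial.aeval (R := MvPolynomial (Fin m × Fin n) k) φ'
      (MvPolynomial.aeval u f)).coeff ℓ := by
    show Θ ((MvPolynomial.aeval u f).coeff ℓ) = _
    have e1 : Θ ((MvPolynomial.aeval u f).coeff ℓ)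
        = (Polynomial.map (Θ : MvPolynomial (Fin m × Fin n) k →+* MvPolynomial (Fin m × Fin n) k) (MvPolynomial.aeval u f)).coeff ℓ :=
      (Polynomial.coeff_map _ _).symm
    rw [e1]
    have e2 : Polynomial.map (Θ : MvPolynomial (Fin m × Fin n) k →+* MvPolynomial (Fin m × Fin n) k) (MvPolynomial.aeval u f)
        = MvPolynomial.aeval v f := by
      have := congrFun (congrArg DFunLike.coe step2) f
      simpa [Polynomial.coe_mapAlgHom] using this
    have e5 : Polynomial.aeval (R := MvPolynomial (Fin m × Fin n) k) φ' (MvPolynomial.aeval u f)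
        = MvPolynomial.aeval w f := by
      have := congrFun (congrArg DFunLike.coe step5) f
      simpa using this
    rw [e2, e5, step4]
  rw [chain, coeff_aeval_comp φ h0 _ hℓ]
  rfl
end Key

end Aux

theorem stmt13 (k : Type*) [Field k] [Fintype k] (p : ℕ) (hp : p.Prime) [CharP k p]
    (n m : ℕ) (hm : 2 ≤ m) (hpm : m < p)
    (f : MvPolynomial (Fin n) k) (A : ℕ → k) (hA : A (m - 1) ≠ 0) :
    ∃ (Θ : MvPolynomial (Fin m × Fin n) k ≃ₐ[k] MvPolynomial (Fin m × Fin n) k)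
      (b₀ bm : k), bm ≠ 0 ∧
      (∀ j : Fin n,
        Θ (MvPolynomial.X ((⟨0, by omega⟩ : Fin m), j))
          = MvPolynomial.X ((⟨0, by omega⟩ : Fin m), j)) ∧
      Θ (∑ i ∈ Finset.range m, A i • jetCoeff m n f i)
        = b₀ • jetCoeff m n f 0 + bm • jetCoeff m n f (m - 1) := by
  classical
  obtain ⟨φ, h0, h1, hG⟩ := existsPhi p hp hm hpm A hA
  set M : Matrix (Fin m) (Fin m) k :=
    Matrix.of fun i i' : Fin m => (φ ^ (i' : ℕ)).coeff (i : ℕ) with hM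
  have htri : M.BlockTriangular OrderDual.toDual := by
    intro i i' h
    exact coeffPowLt h0 (by exact_mod_cast h)
  have hdet : M.det = 1 := by
    rw [Matrix.det_of_lowerTriangular M htri]
    refine Finset.prod_eq_one fun i _ => ?_
    show (φ ^ (i : ℕ)).coeff (i : ℕ) = 1
    rw [coeffPowSelf h0, h1, one_pow]
  have hMu : IsUnit M.det := by rw [hdet]; exact isUnit_one
  have hMN : M * M⁻¹ = 1 := Matrix.mul_nonsing_inv M hMu
  have hNM : M⁻¹ * M = 1 := Matrix.nonsing_inv_mul M hMu
  refine ⟨AlgEquiv.ofAlgHom (subHom M) (subHom M⁻¹)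
    (by rw [subHom_comp, hNM, subHom_one]) (by rw [subHom_comp, hMN, subHom_one]),
    A 0, A (m - 1), hA, ?_, ?_⟩
  · intro j
    show subHom M (MvPolynomial.X _) = _
    rw [subHom_X, Finset.sum_eq_single (⟨0, by omega⟩ : Fin m)]
    · have hone : M ⟨0, by omega⟩ ⟨0, by omega⟩ = 1 := by
        show (φ ^ ((⟨0, by omega⟩ : Fin m) : ℕ)).coeff 0 = 1
        norm_num
      rw [hone]
      simp
    · intro b _ hb
      have hb' : 0 < (b : ℕ) := by
        rcases Nat.eq_zero_or_pos (b : ℕ) with h | h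
        · exact absurd (Fin.ext h) hb
        · exact h
      have hzero : M ⟨0, by omega⟩ b = 0 := coeffPowLt h0 hb'
      rw [hzero]
      simp
    · intro h; exact absurd (Finset.mem_univ _) h
  · show subHom M (∑ i ∈ Finset.range m, A i • jetCoeff m n f i) = _
    rw [map_sum]
    have hterm : ∀ ℓ ∈ Finset.range m, subHom M (A ℓ • jetCoeff m n f ℓ)
        = ∑ i : Fin m, (A ℓ * (φ ^ (i : ℕ)).coeff ℓ) • jetCoeff m n f (i : ℕ) := by
      intro ℓ hℓ
      rw [map_smul, subHom_jetCoeff φ h0 f (Finset.mem_range.mp hℓ), Finset.smul_sum]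
      exact Finset.sum_congr rfl fun i _ => by rw [smul_smul]
    rw [Finset.sum_congr rfl hterm, Finset.sum_comm]
    have hcollect : ∀ i : Fin m,
        ∑ ℓ ∈ Finset.range m, (A ℓ * (φ ^ (i : ℕ)).coeff ℓ) • jetCoeff m n f (i : ℕ)
          = (∑ ℓ ∈ Finset.range m, A ℓ * (φ ^ (i : ℕ)).coeff ℓ) • jetCoeff m n f (i : ℕ) :=
      fun i => (Finset.sum_smul).symm
    rw [Finset.sum_congr rfl fun i _ => hcollect i]
    set g : Fin m → k := fun i => ∑ ℓ ∈ Finset.range m, A ℓ * (φ ^ (i : ℕ)).coeff ℓ with hg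
    have hne : (⟨0, by omega⟩ : Fin m) ≠ ⟨m - 1, by omega⟩ := by
      intro h
      have := congrArg Fin.val h
      simp at this
      omega
    have hsub : ∑ i : Fin m, g i • jetCoeff m n f (i : ℕ)
        = ∑ i ∈ ({⟨0, by omega⟩, ⟨m - 1, by omega⟩} : Finset (Fin m)),
            g i • jetCoeff m n f (i : ℕ) := by
      refine (Finset.sum_subset (Finset.subset_univ _) ?_).symm
      intro x _ hx
      simp only [Finset.mem_insert, Finset.mem_singleton] at hx
      push_neg at hx
      have hx0 : (x : ℕ) ≠ 0 := fun h => hx.1 (Fin.ext h)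
      have hxm : (x : ℕ) ≠ m - 1 := fun h => hx.2 (Fin.ext h)
      have hx2 : 1 ≤ (x : ℕ) ∧ (x : ℕ) ≤ m - 2 := by
        have := x.isLt
        omega
      simp only [hg]
      rw [hG (x : ℕ) hx2.1 hx2.2, zero_smul]
    rw [hsub, Finset.sum_pair hne]
    have hg0 : g ⟨0, by omega⟩ = A 0 := by
      show ∑ ℓ ∈ Finset.range m, A ℓ * (φ ^ ((⟨0, by omega⟩ : Fin m) : ℕ)).coeff ℓ = A 0
      rw [Finset.sum_eq_single 0]
      · norm_num
      · intro b _ hb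
        simp [Polynomial.coeff_one, hb]
      · intro h; exact absurd (Finset.mem_range.mpr (by omega)) h
    have hgm : g ⟨m - 1, by omega⟩ = A (m - 1) := by
      show ∑ ℓ ∈ Finset.range m, A ℓ * (φ ^ ((⟨m - 1, by omega⟩ : Fin m) : ℕ)).coeff ℓ
          = A (m - 1)
      rw [Finset.sum_eq_single (m - 1)]
      · show A (m - 1) * (φ ^ (m - 1)).coeff (m - 1) = A (m - 1)
        rw [coeffPowSelf h0, h1, one_pow, mul_one]
      · intro b hb hbne
        have hb' : b < m - 1 := by
          have := Finset.mem_range.mp hb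
          omega
        show A b * (φ ^ (m - 1)).coeff b = 0
        rw [coeffPowLt h0 hb', mul_zero]
      · intro h; exact absurd (Finset.mem_range.mpr (by omega)) h
    rw [hg0, hgm]
end

section
/- Let k be a field, f in k[x_1,...,x_n], m ≥ 2, b_0 in k and b_{m-1} in k^*. Let W ⊆ k^{mn} be the set of (m-1)-jets x^{(m-1)} with f_1(x^{(1)}) = ... = f_{m-2}(x^{(m-2)}) = 0 and such that the gradient of f at the base point x^{(0)} = (x_{01},...,x_{0n}) is nonzero. Then W is the disjoint union of the sets A_j (j = 1,...,n), where A_j = { x^{(m-1)} in W : ∂f/∂x_i(x^{(0)}) = 0 for all i < j and ∂f/∂x_j(x^{(0)}) ≠ 0 }, and on each A_j the map x^{(m-1)} ↦ (b_0 f_0 + b_{m-1} f_{m-1})(x^{(m-1)}) is surjective onto k with all fibers of equal cardinality when k is finite; indeed translation of the coordinate x_{(m-1)j} by elements of k acts on A_j preserving all f_i for i ≤ m-2 and shifting b_0 f_0 + b_{m-1} f_{m-1} by b_{m-1} * ∂f/∂x_j(x^{(0)}) times the translation amount. -/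
section helpers

variable {k : Type*} [Field k] {n m : ℕ}

/-- The substitution `g x j = ∑ i x_{ij} t^i`. -/
noncomputable def Gs (x : Fin m × Fin n → k) (j : Fin n) : Polynomial k :=
  ∑ i : Fin m, Polynomial.C (x (i, j)) * Polynomial.X ^ (i : ℕ)

lemma eval_jetCoeff (f : MvPolynomial (Fin n) k) (x : Fin m × Fin n → k) (ℓ : ℕ) :
    MvPolynomial.eval x (jetCoeff m n f ℓ) = (MvPolynomial.aeval (Gs x) f).coeff ℓ := by
  rw [jetCoeff, ← Polynomial.coeff_map]
  congr 1
  rw [MvPolynomial.aeval_def, MvPolynomial.aeval_def, ← Polynomial.coe_mapRingHom,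
    MvPolynomial.eval₂_comp_left (Polynomial.mapRingHom (MvPolynomial.eval x))]
  congr 1
  · ext r
    simp [Polynomial.algebraMap_apply, MvPolynomial.algebraMap_eq]
  · funext j
    simp [Gs, Polynomial.map_sum]

lemma coeff_zero_aeval (hm : 0 < m) (h : MvPolynomial (Fin n) k) (x : Fin m × Fin n → k) :
    (MvPolynomial.aeval (Gs x) h).coeff 0
      = MvPolynomial.eval (fun j => x (⟨0, hm⟩, j)) h := by
  have : (MvPolynomial.aeval (Gs x) h).coeff 0
      = Polynomial.constantCoeff (MvPolynomial.aeval (Gs x) h) := rfl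
  rw [this, MvPolynomial.aeval_def,
    MvPolynomial.eval₂_comp_left (Polynomial.constantCoeff (R := k)) (algebraMap k (Polynomial k)) (Gs x) h,
    MvPolynomial.eval, MvPolynomial.coe_eval₂Hom]
  congr 1
  · ext r; simp
  · funext j
    simp only [Function.comp_apply, Gs, Polynomial.constantCoeff_apply, map_sum]
    rw [Finset.sum_eq_single (⟨0, hm⟩ : Fin m)]
    · simp
    · intro i _ hi
      have : (i : ℕ) ≠ 0 := by
        intro h0; exact hi (Fin.ext h0)
      simp [Polynomial.coeff_X_pow, this, Ne.symm this, Polynomial.coeff_C_mul]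
    · simp

end helpers

section key
variable {k : Type*} [Field k] {n m : ℕ}

/-- The substitution sending `X j` to a fresh univariate variable and `X j'` to `Gs x j'`. -/
noncomputable def Phi (x : Fin m × Fin n → k) (j : Fin n) :
    MvPolynomial (Fin n) k →ₐ[k] Polynomial (Polynomial k) :=
  MvPolynomial.aeval (fun j' => if j' = j then Polynomial.X else Polynomial.C (Gs x j'))

lemma eval_Phi (x : Fin m × Fin n → k) (j : Fin n) (p : Polynomial k)
    (h : MvPolynomial (Fin n) k) :
    Polynomial.eval p (Phi x j h) = MvPolynomial.aeval (Function.update (Gs x) j p) h := by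
  rw [Phi, MvPolynomial.aeval_def, MvPolynomial.aeval_def,
    show Polynomial.eval p = ⇑(Polynomial.evalRingHom p) from rfl,
    MvPolynomial.eval₂_comp_left (Polynomial.evalRingHom p)]
  congr 1
  · ext r; simp [Polynomial.algebraMap_apply]
  · funext j'
    by_cases hj : j' = j <;> simp [hj, Function.update_apply]

lemma derivative_Phi (x : Fin m × Fin n → k) (j : Fin n) (h : MvPolynomial (Fin n) k) :
    Polynomial.derivative (Phi x j h) = Phi x j (MvPolynomial.pderiv j h) := by
  induction h using MvPolynomial.induction_on with
  | C a => simp [Phi, Polynomial.algebraMap_apply]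
  | add p q hp hq => simp [map_add, hp, hq]
  | mul_X p i hp =>
    rw [map_mul, Polynomial.derivative_mul, hp, MvPolynomial.pderiv_mul, map_add, map_mul,
      MvPolynomial.pderiv_X]
    by_cases hij : i = j <;> simp [Phi, hij, Pi.single_apply]

lemma Gs_update (hm : 2 ≤ m) (x : Fin m × Fin n → k) (j : Fin n) (z : k) :
    Gs (Function.update x ((⟨m - 1, Nat.sub_lt (Nat.lt_of_lt_of_le Nat.zero_lt_two hm) Nat.one_pos⟩ : Fin m), j)
        (x ((⟨m - 1, Nat.sub_lt (Nat.lt_of_lt_of_le Nat.zero_lt_two hm) Nat.one_pos⟩ : Fin m), j) + z))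
      = Function.update (Gs x) j (Gs x j + Polynomial.C z * Polynomial.X ^ (m - 1)) := by
  funext j'
  rcases eq_or_ne j' j with hj | hj
  · subst hj
    simp only [Function.update_self, Gs]
    have : ∀ i : Fin m,
        Polynomial.C (Function.update x ((⟨m - 1, by omega⟩ : Fin m), j')
            (x ((⟨m - 1, by omega⟩ : Fin m), j') + z) (i, j')) * Polynomial.X ^ (i : ℕ)
          = Polynomial.C (x (i, j')) * Polynomial.X ^ (i : ℕ)
            + (if i = (⟨m - 1, by omega⟩ : Fin m)
              then Polynomial.C z * Polynomial.X ^ (m - 1) else 0) := by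
      intro i
      rcases eq_or_ne i (⟨m - 1, by omega⟩ : Fin m) with hi | hi
      · subst hi
        simp [Function.update_self, map_add, add_mul]
      · have : (i, j') ≠ ((⟨m - 1, by omega⟩ : Fin m), j') := by
          simp [Prod.ext_iff, hi]
        simp [Function.update_of_ne this, hi]
    rw [Finset.sum_congr rfl (fun i _ => this i), Finset.sum_add_distrib,
      Finset.sum_ite_eq' Finset.univ (⟨m - 1, by omega⟩ : Fin m)]
    simp
  · rw [Function.update_of_ne hj]
    simp only [Gs]
    congr 1
    funext i
    have : (i, j') ≠ ((⟨m - 1, by omega⟩ : Fin m), j) := by simp [Prod.ext_iff, hj]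
    rw [Function.update_of_ne this]

lemma eval_jet_update (hm : 2 ≤ m) (f : MvPolynomial (Fin n) k)
    (x : Fin m × Fin n → k) (j : Fin n) (z : k) (ℓ : ℕ) (hℓ : ℓ ≤ m - 1) :
    MvPolynomial.eval (Function.update x ((⟨m - 1, Nat.sub_lt (Nat.lt_of_lt_of_le Nat.zero_lt_two hm) Nat.one_pos⟩ : Fin m), j)
        (x ((⟨m - 1, Nat.sub_lt (Nat.lt_of_lt_of_le Nat.zero_lt_two hm) Nat.one_pos⟩ : Fin m), j) + z)) (jetCoeff m n f ℓ)
      = MvPolynomial.eval x (jetCoeff m n f ℓ)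
        + (if ℓ = m - 1 then
            MvPolynomial.eval (fun j' => x ((⟨0, Nat.lt_of_lt_of_le Nat.zero_lt_two hm⟩ : Fin m), j'))
              (MvPolynomial.pderiv j f) * z
          else 0) := by
  rw [eval_jetCoeff, eval_jetCoeff, Gs_update hm]
  have h1 : MvPolynomial.aeval
        (Function.update (Gs x) j (Gs x j + Polynomial.C z * Polynomial.X ^ (m - 1))) f
      = Polynomial.eval (Gs x j + Polynomial.C z * Polynomial.X ^ (m - 1)) (Phi x j f) :=
    (eval_Phi x j _ f).symm
  have h2 : MvPolynomial.aeval (Gs x) f = Polynomial.eval (Gs x j) (Phi x j f) := by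
    rw [eval_Phi, Function.update_eq_self]
  obtain ⟨K, hK⟩ := Polynomial.binomExpansion (Phi x j f) (Gs x j)
    (Polynomial.C z * Polynomial.X ^ (m - 1))
  rw [h1, h2, hK]
  have hder : Polynomial.eval (Gs x j) (Polynomial.derivative (Phi x j f))
      = MvPolynomial.aeval (Gs x) (MvPolynomial.pderiv j f) := by
    rw [derivative_Phi, eval_Phi, Function.update_eq_self]
  rw [hder]
  set Q := MvPolynomial.aeval (Gs x) (MvPolynomial.pderiv j f) with hQ
  have e1 : Q * (Polynomial.C z * Polynomial.X ^ (m - 1))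
      = (Q * Polynomial.C z) * Polynomial.X ^ (m - 1) := by ring
  have e2 : K * (Polynomial.C z * Polynomial.X ^ (m - 1)) ^ 2
      = (K * Polynomial.C z ^ 2) * Polynomial.X ^ (2 * (m - 1)) := by
    rw [mul_pow, ← pow_mul]; ring
  rw [e1, e2, Polynomial.coeff_add, Polynomial.coeff_add, Polynomial.coeff_mul_X_pow',
    Polynomial.coeff_mul_X_pow']
  have h2m : ¬ (2 * (m - 1) ≤ ℓ) := by omega
  rw [if_neg h2m, add_zero]
  congr 1
  rcases eq_or_ne ℓ (m - 1) with hℓ' | hℓ'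
  · subst hℓ'
    rw [if_pos le_rfl, if_pos rfl, Nat.sub_self, Polynomial.coeff_mul_C, hQ,
      coeff_zero_aeval (by omega)]
  · rw [if_neg (by omega), if_neg hℓ']

end key


theorem stmt15 (k : Type*) [Field k] (n m : ℕ) (hm : 2 ≤ m)
    (f : MvPolynomial (Fin n) k) (b₀ b : k) (hb : b ≠ 0) :
    let jet : ℕ → MvPolynomial (Fin m × Fin n) k := jetCoeff m n f
    let grad : Fin n → (Fin m × Fin n → k) → k := fun j x =>
      MvPolynomial.eval (fun j' => x ((⟨0, by omega⟩ : Fin m), j')) (MvPolynomial.pderiv j f)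
    let W : Set (Fin m × Fin n → k) :=
      {x | (∀ ℓ, 1 ≤ ℓ → ℓ ≤ m - 2 → MvPolynomial.eval x (jet ℓ) = 0) ∧ ∃ j, grad j x ≠ 0}
    let A : Fin n → Set (Fin m × Fin n → k) := fun j =>
      {x ∈ W | (∀ i, i < j → grad i x = 0) ∧ grad j x ≠ 0}
    let v : (Fin m × Fin n → k) → k := fun x =>
      MvPolynomial.eval x (b₀ • jet 0 + b • jet (m - 1))
    (W = ⋃ j, A j) ∧
    (∀ j j', j ≠ j' → Disjoint (A j) (A j')) ∧
    (∀ j, ∀ x ∈ A j, ∀ z : k,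
      Function.update x ((⟨m - 1, by omega⟩ : Fin m), j)
          (x ((⟨m - 1, by omega⟩ : Fin m), j) + z) ∈ A j ∧
      (∀ ℓ, ℓ ≤ m - 2 →
        MvPolynomial.eval (Function.update x ((⟨m - 1, by omega⟩ : Fin m), j)
          (x ((⟨m - 1, by omega⟩ : Fin m), j) + z)) (jet ℓ) = MvPolynomial.eval x (jet ℓ)) ∧
      v (Function.update x ((⟨m - 1, by omega⟩ : Fin m), j)
          (x ((⟨m - 1, by omega⟩ : Fin m), j) + z))
        = v x + b * grad j x * z) ∧
    (Finite k → ∀ j,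
      ((A j).Nonempty → ∀ c : k, ∃ x ∈ A j, v x = c) ∧
      ∀ c c' : k,
        Nat.card {x : Fin m × Fin n → k // x ∈ A j ∧ v x = c} =
          Nat.card {x : Fin m × Fin n → k // x ∈ A j ∧ v x = c'}) := by
  intro jet grad W A v
  classical
  -- notation for the translated point
  set p0 : Fin m := ⟨0, by omega⟩ with hp0
  have hne : ∀ (j j' : Fin n), ((p0, j') : Fin m × Fin n) ≠ (⟨m - 1, by omega⟩, j) := by
    intro j j'
    simp only [ne_eq, Prod.ext_iff, not_and]
    intro h
    exfalso
    have := congrArg Fin.val h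
    simp [hp0] at this
    omega
  have hgrad : ∀ (i j : Fin n) (x : Fin m × Fin n → k) (z : k),
      grad i (Function.update x ((⟨m - 1, by omega⟩ : Fin m), j)
        (x ((⟨m - 1, by omega⟩ : Fin m), j) + z)) = grad i x := by
    intro i j x z
    have hfun : (fun j' => Function.update x ((⟨m - 1, by omega⟩ : Fin m), j)
        (x ((⟨m - 1, by omega⟩ : Fin m), j) + z) ((⟨0, by omega⟩ : Fin m), j'))
        = fun j' => x ((⟨0, by omega⟩ : Fin m), j') := by
      funext j'
      exact Function.update_of_ne (hne j j') _ x
    simp only [grad, hfun]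
  have hjet : ∀ (j : Fin n) (x : Fin m × Fin n → k) (z : k) (ℓ : ℕ), ℓ ≤ m - 1 →
      MvPolynomial.eval (Function.update x ((⟨m - 1, by omega⟩ : Fin m), j)
          (x ((⟨m - 1, by omega⟩ : Fin m), j) + z)) (jet ℓ)
        = MvPolynomial.eval x (jet ℓ)
          + (if ℓ = m - 1 then grad j x * z else 0) := by
    intro j x z ℓ hℓ
    exact eval_jet_update hm f x j z ℓ hℓ
  have hjet' : ∀ (j : Fin n) (x : Fin m × Fin n → k) (z : k) (ℓ : ℕ), ℓ ≤ m - 2 →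
      MvPolynomial.eval (Function.update x ((⟨m - 1, by omega⟩ : Fin m), j)
          (x ((⟨m - 1, by omega⟩ : Fin m), j) + z)) (jet ℓ)
        = MvPolynomial.eval x (jet ℓ) := by
    intro j x z ℓ hℓ
    rw [hjet j x z ℓ (by omega), if_neg (by omega), add_zero]
  have hv : ∀ x, v x = b₀ * MvPolynomial.eval x (jet 0) + b * MvPolynomial.eval x (jet (m - 1)) := by
    intro x
    simp [v, MvPolynomial.smul_eval]
  -- the main translation statement
  have main : ∀ j, ∀ x ∈ A j, ∀ z : k,
      Function.update x ((⟨m - 1, by omega⟩ : Fin m), j)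
          (x ((⟨m - 1, by omega⟩ : Fin m), j) + z) ∈ A j ∧
      (∀ ℓ, ℓ ≤ m - 2 →
        MvPolynomial.eval (Function.update x ((⟨m - 1, by omega⟩ : Fin m), j)
          (x ((⟨m - 1, by omega⟩ : Fin m), j) + z)) (jet ℓ) = MvPolynomial.eval x (jet ℓ)) ∧
      v (Function.update x ((⟨m - 1, by omega⟩ : Fin m), j)
          (x ((⟨m - 1, by omega⟩ : Fin m), j) + z))
        = v x + b * grad j x * z := by
    intro j x hx z
    obtain ⟨⟨hW1, hW2⟩, hA1, hA2⟩ := hx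
    refine ⟨⟨⟨?_, ?_⟩, ?_, ?_⟩, ?_, ?_⟩
    · intro ℓ h1 h2
      rw [hjet' j x z ℓ h2]
      exact hW1 ℓ h1 h2
    · exact ⟨j, by rw [hgrad]; exact hA2⟩
    · intro i hi
      rw [hgrad]
      exact hA1 i hi
    · rw [hgrad]; exact hA2
    · exact hjet' j x z
    · rw [hv, hv, hjet' j x z 0 (by omega), hjet j x z (m - 1) le_rfl, if_pos rfl]
      ring
  refine ⟨?_, ?_, main, ?_⟩
  · -- W = ⋃ A j
    ext x
    simp only [Set.mem_iUnion]
    constructor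
    · rintro ⟨h1, j, hj⟩
      obtain ⟨j₀, hj₀, hmin⟩ := Finset.exists_min_image
        (Finset.univ.filter fun j => grad j x ≠ 0) id ⟨j, by simp [hj]⟩
      simp only [Finset.mem_filter] at hj₀
      refine ⟨j₀, ⟨⟨h1, j, hj⟩, ?_, hj₀.2⟩⟩
      intro i hi
      by_contra hgi
      exact absurd (hmin i (by simp [hgi])) (by simpa using hi.not_ge)
    · rintro ⟨j, hj⟩
      exact hj.1
  · -- disjointness
    intro j j' hjj'
    rw [Set.disjoint_left]
    rintro x ⟨_, hx1, hx2⟩ ⟨_, hy1, hy2⟩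
    rcases hjj'.lt_or_gt with h | h
    · exact hx2 (hy1 j h)
    · exact hy2 (hx1 j' h)
  · -- finite part
    intro _ j
    set p : Fin m × Fin n := ((⟨m - 1, by omega⟩ : Fin m), j) with hp
    set T : k → (Fin m × Fin n → k) → (Fin m × Fin n → k) :=
      fun z x => Function.update x p (x p + z) with hT
    have hTT : ∀ (x : Fin m × Fin n → k) (z z' : k), T z' (T z x) = T (z + z') x := by
      intro x z z'
      simp only [hT, Function.update_self, Function.update_idem]
      rw [add_assoc]
    have hT0 : ∀ x : Fin m × Fin n → k, T 0 x = x := by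
      intro x
      simp [hT]
    have hmove : ∀ x ∈ A j, ∀ c : k, T ((c - v x) / (b * grad j x)) x ∈ A j ∧
        v (T ((c - v x) / (b * grad j x)) x) = c := by
      intro x hx c
      have hbg : b * grad j x ≠ 0 := mul_ne_zero hb hx.2.2
      obtain ⟨hmem, _, hval⟩ := main j x hx ((c - v x) / (b * grad j x))
      refine ⟨hmem, ?_⟩
      rw [hval]
      rw [mul_comm, div_mul_cancel₀ _ hbg]; ring
    constructor
    · rintro ⟨x, hx⟩ c
      exact ⟨_, (hmove x hx c).1, (hmove x hx c).2⟩
    · intro c c'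
      have hgradT : ∀ x z, grad j (T z x) = grad j x := fun x z => hgrad j j x z
      refine Nat.card_congr (Equiv.mk
        (fun y => ⟨T ((c' - v y.1) / (b * grad j y.1)) y.1,
          (hmove y.1 y.2.1 c').1, (hmove y.1 y.2.1 c').2⟩)
        (fun y => ⟨T ((c - v y.1) / (b * grad j y.1)) y.1,
          (hmove y.1 y.2.1 c).1, (hmove y.1 y.2.1 c).2⟩) ?_ ?_)
      · rintro ⟨x, hA, hvx⟩
        apply Subtype.ext
        simp only
        set z := (c' - v x) / (b * grad j x) with hz
        have h1 : v (T z x) = c' := (hmove x hA c').2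
        have h2 : grad j (T z x) = grad j x := hgradT x z
        rw [hTT, h1, h2]
        have : z + (c - c') / (b * grad j x) = 0 := by
          rw [hz, hvx, ← add_div]
          ring_nf
        rw [this, hT0]
      · rintro ⟨x, hA, hvx⟩
        apply Subtype.ext
        simp only
        set z := (c - v x) / (b * grad j x) with hz
        have h1 : v (T z x) = c := (hmove x hA c).2
        have h2 : grad j (T z x) = grad j x := hgradT x z
        rw [hTT, h1, h2]
        have : z + (c' - c) / (b * grad j x) = 0 := by
          rw [hz, hvx, ← add_div]
          ring_nf
        rw [this, hT0]
end
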